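/- Let T be a tree on a finite vertex set V (with at least 2 elements) with positive edge weights, and let w(u,v) = d_T(u,v) be the induced tree metric on V × V. Let d : V → ℕ with d(v) ≥ 1 for every v, and let T* be any spanning tree on V such that deg_{T*}(v) ≤ d(v) for every v ∈ V. Then there exists a feasible and legal integer flow f for T and d whose cost is at most w(T*) − w(T), where weights of spanning trees are computed using the tree metric w = d_T. -/

import Mathlib

open scoped Classical

/-- The degree of a vertex `v` in the graph `G`. -/
noncomputable def degreeOf {V : Type*} [Fintype V] (G : SimpleGraph V) (v : V) : ℕ :=
  Set.ncard {u | G.Adj v u}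

/-- The weight of the graph `G` with respect to the (symmetric) weight function `w`. -/
noncomputable def weightOf {V : Type*} [Fintype V] (G : SimpleGraph V) (w : V → V → ℝ) : ℝ :=
  (∑ u : V, ∑ v : V, if G.Adj u v then w u v else 0) / 2

/-- A flow is skew-symmetric: `f u v = - f v u`. -/
def IsSkew {V : Type*} (f : V → V → ℤ) : Prop := ∀ u v, f u v = - f v u

/-- The surplus of `v` under `f`: the incoming positive flow minus the outgoing positive flow. -/
def surplus {V : Type*} [Fintype V] (f : V → V → ℤ) (v : V) : ℤ :=
  (∑ u : V, if 0 < f u v then f u v else 0) - ∑ u : V, if 0 < f v u then f v u else 0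

/-- A flow is feasible for tree `T` and degree bounds `d` if the surplus of every vertex is
at least its deficit `deg_T v - d v`. -/
def FeasibleFlow {V : Type*} [Fintype V] (T : SimpleGraph V) (d : V → ℕ)
    (f : V → V → ℤ) : Prop :=
  ∀ v, (degreeOf T v : ℤ) - (d v : ℤ) ≤ surplus f v

/-- A flow is legal for tree `T` if the surplus of every vertex is at most `deg_T v - 1`. -/
def LegalFlow {V : Type*} [Fintype V] (T : SimpleGraph V) (f : V → V → ℤ) : Prop :=
  ∀ v, surplus f v ≤ (degreeOf T v : ℤ) - 1

/-- The cost of a (skew-symmetric) flow. -/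
noncomputable def flowCost {V : Type*} [Fintype V] (f : V → V → ℤ) (w : V → V → ℝ) : ℝ :=
  ∑ u : V, ∑ v : V, if 0 < f u v then (f u v : ℝ) * w u v else 0

section Aux
variable {V : Type*} [Fintype V]

lemma surplus_skew (f : V → V → ℤ) (hf : IsSkew f) (v : V) :
    surplus f v = ∑ u : V, f u v := by
  unfold surplus
  rw [← Finset.sum_sub_distrib]
  apply Finset.sum_congr rfl
  intro u _
  rw [hf v u]
  rcases lt_trichotomy (f u v) 0 with h | h | h <;> simp_all <;> omega

noncomputable def eFlow (x y : V) : V → V → ℤ := fun u v =>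
  (if u = x ∧ v = y then 1 else 0) - (if u = y ∧ v = x then 1 else 0)

lemma eFlow_skew (x y : V) : IsSkew (eFlow x y) := by
  intro u v; unfold eFlow
  rw [if_congr (and_comm : v = x ∧ u = y ↔ u = y ∧ v = x) rfl rfl,
    if_congr (and_comm : v = y ∧ u = x ↔ u = x ∧ v = y) rfl rfl]
  ring

lemma skew_add {f g : V → V → ℤ} (hf : IsSkew f) (hg : IsSkew g) : IsSkew (f + g) := by
  intro u v; simp only [Pi.add_apply]; rw [hf u v, hg u v]; ring

lemma skew_zero : IsSkew (0 : V → V → ℤ) := by intro u v; simp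

lemma skew_diag {f : V → V → ℤ} (hf : IsSkew f) (v : V) : f v v = 0 := by
  have := hf v v; omega

lemma sum_eFlow (x y z : V) :
    ∑ u : V, eFlow x y u z = (if z = y then 1 else 0) - (if z = x then 1 else 0) := by
  unfold eFlow
  rw [Finset.sum_sub_distrib]
  congr 1
  · by_cases h : z = y <;> simp [h]
  · by_cases h : z = x <;> simp [h]

noncomputable def walkFlow {G : SimpleGraph V} : ∀ {a b : V}, G.Walk a b → (V → V → ℤ)
  | _, _, .nil => 0
  | a, _, .cons (v := c) _ p => eFlow a c + walkFlow p

@[simp] lemma walkFlow_nil {G : SimpleGraph V} {a : V} :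
    walkFlow (.nil : G.Walk a a) = 0 := rfl

@[simp] lemma walkFlow_cons {G : SimpleGraph V} {a c b : V} (h : G.Adj a c) (p : G.Walk c b) :
    walkFlow (.cons h p) = eFlow a c + walkFlow p := rfl

lemma walkFlow_skew {G : SimpleGraph V} {a b : V} (p : G.Walk a b) : IsSkew (walkFlow p) := by
  induction p with
  | nil => exact skew_zero
  | cons h p ih => rw [walkFlow_cons]; exact skew_add (eFlow_skew _ _) ih

lemma sum_walkFlow {G : SimpleGraph V} {a b : V} (p : G.Walk a b) (z : V) :
    ∑ u : V, walkFlow p u z = (if z = b then 1 else 0) - (if z = a then 1 else 0) := by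
  induction p with
  | nil => simp
  | cons h p ih =>
    simp only [walkFlow_cons, Pi.add_apply]
    rw [Finset.sum_add_distrib, ih, sum_eFlow]
    ring

end Aux

section Cost
variable {V : Type*} [Fintype V]

lemma flowCost_zero (w : V → V → ℝ) : flowCost (0 : V → V → ℤ) w = 0 := by
  unfold flowCost; simp

lemma flowCost_add_le (f g : V → V → ℤ) (w : V → V → ℝ) (hw : ∀ u v, 0 ≤ w u v) :
    flowCost (f + g) w ≤ flowCost f w + flowCost g w := by
  unfold flowCost
  rw [← Finset.sum_add_distrib]
  apply Finset.sum_le_sum; intro u _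
  rw [← Finset.sum_add_distrib]
  apply Finset.sum_le_sum; intro v _
  have key : ∀ a b c : ℝ, 0 ≤ c →
      (if 0 < a + b then (a+b)*c else 0) ≤ (if 0 < a then a*c else 0) + (if 0 < b then b*c else 0) := by
    intro a b c hc; split_ifs <;> nlinarith
  simp only [Pi.add_apply]
  simp only [← Int.cast_pos (R := ℝ)]
  push_cast
  exact key _ _ _ (hw u v)

lemma flowCost_eFlow_le (x y : V) (w : V → V → ℝ) (hw : ∀ u v, 0 ≤ w u v) :
    flowCost (eFlow x y) w ≤ w x y := by
  unfold flowCost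
  have : ∀ u v : V, (if 0 < eFlow x y u v then (eFlow x y u v : ℝ) * w u v else 0)
      ≤ (if u = x ∧ v = y then w x y else 0) := by
    intro u v
    unfold eFlow
    by_cases h1 : u = x ∧ v = y
    · obtain ⟨rfl, rfl⟩ := h1
      by_cases h2 : u = v
      · subst h2; simp [hw]
      · have : ¬ (u = v ∧ v = u) := fun h => h2 h.1
        simp only [this, if_true, if_false, and_self, true_and]
        split_ifs <;> simp [hw u v] <;> norm_num
    · simp only [h1, if_false]
      split_ifs with h2 h3 h4
      · exact absurd h3 (by decide)
      · norm_num
      · exact absurd h4 (by decide)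
      · norm_num
  calc _ ≤ ∑ u : V, ∑ v : V, (if u = x ∧ v = y then w x y else 0) := by
        apply Finset.sum_le_sum; intro u _; exact Finset.sum_le_sum fun v _ => this u v
    _ = w x y := by
        simp only [ite_and]
        rw [Finset.sum_eq_single x]
        · rw [Finset.sum_eq_single y] <;> simp +contextual
        · intro b _ hb; simp [hb]
        · simp
end Cost

section Walks
variable {V : Type*} [Fintype V] {G : SimpleGraph V}

lemma flowCost_walkFlow_le (w : V → V → ℝ) (hw : ∀ u v, 0 ≤ w u v)
    (we : V → V → ℝ) (hsym : ∀ a b, we a b = we b a)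
    (hadj : ∀ u v, G.Adj u v → w u v = we u v)
    {a b : V} (p : G.Walk a b) :
    flowCost (walkFlow p) w ≤ (p.edges.map (Sym2.lift ⟨we, hsym⟩)).sum := by
  induction p with
  | nil => simp [flowCost_zero]
  | cons h p ih =>
    rw [walkFlow_cons]
    refine le_trans (flowCost_add_le _ _ _ hw) ?_
    simp only [SimpleGraph.Walk.edges_cons, List.map_cons, List.sum_cons, Sym2.lift_mk]
    calc _ ≤ w _ _ + (p.edges.map (Sym2.lift ⟨we, hsym⟩)).sum := by
          exact add_le_add (flowCost_eFlow_le _ _ w hw) ih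
      _ = _ := by rw [hadj _ _ h]

lemma degreeOf_eq_sum (G : SimpleGraph V) (v : V) :
    (degreeOf G v : ℤ) = ∑ u : V, (if G.Adj v u then (1 : ℤ) else 0) := by
  unfold degreeOf
  rw [Set.ncard_eq_toFinset_card', Set.toFinset_setOf, Finset.card_filter]
  push_cast
  exact Finset.sum_congr rfl fun u _ => by split_ifs <;> simp

/-- In a preconnected graph on ≥ 2 vertices every vertex has a neighbor. -/
lemma one_le_degreeOf (hG : G.Connected) (hV : 2 ≤ Fintype.card V) (v : V) :
    1 ≤ degreeOf G v := by
  obtain ⟨u, hu⟩ := Fintype.exists_ne_of_one_lt_card (by omega) v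
  have hr : G.Reachable v u := hG.preconnected v u
  have : {u' | G.Adj v u'}.Nonempty := by
    obtain ⟨p⟩ := hr
    cases p with
    | nil => exact absurd rfl hu.symm
    | cons h _ => exact ⟨_, h⟩
  have h2 : 0 < Set.ncard {u' | G.Adj v u'} := (Set.ncard_pos (Set.toFinite _)).mpr this
  unfold degreeOf
  omega

/-- Splitting a walk at the boundary of a predicate. -/
lemma walk_split (L : Sym2 V → ℝ) (R : V → Prop) :
    ∀ {u z : V} (q : G.Walk u z), R u → ¬ R z →
    ∃ x y, G.Adj x y ∧ R x ∧ ¬ R y ∧ ∃ (q1 : G.Walk u x) (q2 : G.Walk y z),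
      (q.edges.map L).sum = (q1.edges.map L).sum + L s(x, y) + (q2.edges.map L).sum := by
  intro u z q
  induction q with
  | nil => intro h1 h2; exact absurd h1 h2
  | cons h q ih =>
    rename_i _ c _
    intro h1 h2
    by_cases hc : R c
    · obtain ⟨x, y, hxy, hRx, hRy, q1, q2, hsum⟩ := ih hc h2
      refine ⟨x, y, hxy, hRx, hRy, .cons h q1, q2, ?_⟩
      simp only [SimpleGraph.Walk.edges_cons, List.map_cons, List.sum_cons, hsum]
      ring
    · exact ⟨_, c, h, h1, hc, .nil, q, by simp⟩

/-- Every endpoint-pair of a walk is, after deleting one edge `s(a,b)`, in one of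
the configurations described. -/
lemma reach_cases (a b : V) :
    ∀ {z y : V} (q : G.Walk z y),
      (G.deleteEdges {s(a, b)}).Reachable z y ∨
      ((G.deleteEdges {s(a, b)}).Reachable z a ∧ (G.deleteEdges {s(a, b)}).Reachable b y) ∨
      ((G.deleteEdges {s(a, b)}).Reachable z b ∧ (G.deleteEdges {s(a, b)}).Reachable a y) := by
  intro z y q
  set Gd := G.deleteEdges {s(a, b)} with hGd
  induction q with
  | nil => exact Or.inl (SimpleGraph.Reachable.refl _)
  | cons h q ih =>
    rename_i u c _ -- h : G.Adj u c, q : G.Walk c y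
    by_cases he : s(u, c) = s(a, b)
    · rw [Sym2.eq_iff] at he
      rcases he with ⟨rfl, rfl⟩ | ⟨rfl, rfl⟩
      · -- u = a, c = b
        rcases ih with h1 | ⟨h1, h2⟩ | ⟨h1, h2⟩
        · exact Or.inr (Or.inl ⟨SimpleGraph.Reachable.refl _, h1⟩)
        · exact Or.inr (Or.inl ⟨SimpleGraph.Reachable.refl _, h2⟩)
        · exact Or.inl h2
      · -- u = b, c = a
        rcases ih with h1 | ⟨h1, h2⟩ | ⟨h1, h2⟩
        · exact Or.inr (Or.inr ⟨SimpleGraph.Reachable.refl _, h1⟩)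
        · exact Or.inl h2
        · exact Or.inr (Or.inr ⟨SimpleGraph.Reachable.refl _, h2⟩)
    · have hadj : Gd.Adj u c := by
        rw [hGd, SimpleGraph.deleteEdges_adj]
        exact ⟨h, by simpa using he⟩
      rcases ih with h1 | ⟨h1, h2⟩ | ⟨h1, h2⟩
      · exact Or.inl (hadj.reachable.trans h1)
      · exact Or.inr (Or.inl ⟨hadj.reachable.trans h1, h2⟩)
      · exact Or.inr (Or.inr ⟨hadj.reachable.trans h1, h2⟩)

end Walks

section Surgery
variable {V : Type*} [Fintype V]

lemma sum_pair (g : V → V → ℝ) (c d : V) :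
    ∑ u : V, ∑ v : V, (if u = c ∧ v = d then g u v else 0) = g c d := by
  simp only [ite_and]
  rw [Finset.sum_eq_single c]
  · rw [Finset.sum_eq_single d] <;> simp +contextual
  · intro b _ hb; simp [hb]
  · simp

lemma sum_sym2_ind (g : V → V → ℝ) (a b : V) (hne : a ≠ b) :
    ∑ u : V, ∑ v : V, (if s(u, v) = s(a, b) then g u v else 0) = g a b + g b a := by
  have : ∀ u v : V, (if s(u, v) = s(a, b) then g u v else 0) =
      (if u = a ∧ v = b then g u v else 0) + (if u = b ∧ v = a then g u v else 0) := by
    intro u v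
    simp only [Sym2.eq_iff]
    by_cases h1 : u = a ∧ v = b
    · obtain ⟨rfl, rfl⟩ := h1
      have h2 : ¬ (u = v ∧ v = u) := fun h => hne (h.1 ▸ rfl)
      simp_all
    · by_cases h2 : u = b ∧ v = a
      · obtain ⟨rfl, rfl⟩ := h2
        simp_all
      · have hh : ¬(u = a ∧ v = b ∨ u = b ∧ v = a) := by tauto
        simp [h1, h2, hh]
  simp only [this, Finset.sum_add_distrib]
  rw [sum_pair, sum_pair]

lemma sum_sym2_ind_one (a b v : V) (hne : a ≠ b) :
    ∑ u : V, (if s(v, u) = s(a, b) then (1 : ℤ) else 0) =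
      (if v = a then 1 else 0) + (if v = b then 1 else 0) := by
  have key : ∀ u : V, (if s(v, u) = s(a, b) then (1 : ℤ) else 0) =
      (if v = a ∧ u = b then 1 else 0) + (if v = b ∧ u = a then 1 else 0) := by
    intro u
    simp only [Sym2.eq_iff]
    by_cases h1 : v = a ∧ u = b
    · obtain ⟨rfl, rfl⟩ := h1; simp [hne]
    · by_cases h2 : v = b ∧ u = a
      · obtain ⟨rfl, rfl⟩ := h2; simp [hne, Ne.symm hne]
      · simp [h1, h2]
  have sp : ∀ c d : V, ∑ u : V, (if v = c ∧ u = d then (1 : ℤ) else 0) =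
      (if v = c then 1 else 0) := by
    intro c d; by_cases h : v = c <;> simp [h]
  simp only [key, Finset.sum_add_distrib, sp]

end Surgery

section Key
variable {V : Type*} [Fintype V]

lemma key (T : SimpleGraph V) (hT : T.IsTree)
    (we : V → V → ℝ) (hsym : ∀ a b, we a b = we b a)
    (hpos : ∀ a b, T.Adj a b → 0 < we a b)
    (dT : V → V → ℝ)
    (hdT : ∀ (u v : V) (p : T.Path u v),
      dT u v = (p.1.edges.map (Sym2.lift ⟨we, hsym⟩)).sum) :
    ∀ (n : ℕ) (T2 : SimpleGraph V), T2.IsTree → (T2.edgeSet \ T.edgeSet).ncard = n →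
    ∃ f : V → V → ℤ, IsSkew f ∧
      (∀ v, surplus f v = (degreeOf T v : ℤ) - degreeOf T2 v) ∧
      flowCost f dT ≤ weightOf T2 dT - weightOf T dT := by
  have hwe_nonneg : ∀ (u v : V) (p : T.Walk u v),
      0 ≤ (p.edges.map (Sym2.lift ⟨we, hsym⟩)).sum := by
    intro u v p
    apply List.sum_nonneg
    intro r hr
    obtain ⟨e, he, rfl⟩ := List.mem_map.mp hr
    have heE : e ∈ T.edgeSet := p.edges_subset_edgeSet he
    induction e with
    | _ c d =>
      exact le_of_lt (by simpa using hpos c d ((SimpleGraph.mem_edgeSet _).mp heE))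
  have hdT0 : ∀ u v, 0 ≤ dT u v := by
    intro u v
    obtain ⟨p⟩ := hT.isConnected.preconnected u v
    rw [hdT u v p.toPath]
    exact hwe_nonneg _ _ _
  have hdT_adj : ∀ u v, T.Adj u v → dT u v = we u v := by
    intro u v h
    rw [hdT u v (SimpleGraph.Path.singleton h)]
    simp [SimpleGraph.Path.singleton]
  have hdT_symm : ∀ u v, dT u v = dT v u := by
    intro u v
    obtain ⟨p⟩ := hT.isConnected.preconnected u v
    rw [hdT u v p.toPath, hdT v u p.toPath.reverse]
    simp [SimpleGraph.Path.reverse, SimpleGraph.Walk.edges_reverse,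
      List.map_reverse, List.sum_reverse]
  intro n
  induction n using Nat.strong_induction_on with
  | _ n ih =>
    intro T2 hT2 hcard
    by_cases hdiff : T2.edgeSet \ T.edgeSet = ∅
    · -- base case : T2 = T
      have hsub : T2.edgeSet ⊆ T.edgeSet := by
        intro e he
        by_contra h
        exact (Set.eq_empty_iff_forall_notMem.mp hdiff e) ⟨he, h⟩
      have hsub2 : T.edgeSet ⊆ T2.edgeSet := by
        intro e
        induction e with
        | _ a b =>
          intro he
          have hadj : T.Adj a b := (SimpleGraph.mem_edgeSet _).mp he
          obtain ⟨p2⟩ := hT2.isConnected.preconnected a b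
          have hp2 : ∀ e' ∈ p2.edges, e' ∈ T.edgeSet :=
            fun e' he' => hsub (p2.edges_subset_edgeSet he')
          have huniq := hT.IsAcyclic.path_unique
            (p2.transfer T hp2).toPath (SimpleGraph.Path.singleton hadj)
          have hmem : s(a, b) ∈ ((p2.transfer T hp2).toPath : T.Walk a b).edges := by
            rw [huniq]; simp [SimpleGraph.Path.singleton]
          have h2 : s(a, b) ∈ (p2.transfer T hp2).edges :=
            SimpleGraph.Walk.edges_toPath_subset _ hmem
          rw [SimpleGraph.Walk.edges_transfer] at h2
          exact p2.edges_subset_edgeSet h2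
      have hTT : T2 = T := SimpleGraph.edgeSet_inj.mp (subset_antisymm hsub hsub2)
      refine ⟨0, skew_zero, ?_, ?_⟩
      · intro v; rw [hTT]; simp [surplus]
      · rw [hTT, flowCost_zero, sub_self]
    · -- inductive step
      have hne_set : (T2.edgeSet \ T.edgeSet).Nonempty := Set.nonempty_iff_ne_empty.mpr hdiff
      have hn1 : 0 < n := hcard ▸ (Set.ncard_pos (Set.toFinite _)).mpr hne_set
      obtain ⟨e0, he0⟩ := hne_set
      revert he0
      induction e0 with
      | _ a b =>
        intro he0
        have hab2 : T2.Adj a b := (SimpleGraph.mem_edgeSet _).mp he0.1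
        have habT : ¬ T.Adj a b := fun h => he0.2 ((SimpleGraph.mem_edgeSet _).mpr h)
        have hne_ab : a ≠ b := hab2.ne
        have hbr : ¬ (T2.deleteEdges {s(a, b)}).Reachable a b := by
          have h := (SimpleGraph.isAcyclic_iff_forall_adj_isBridge.mp hT2.IsAcyclic) hab2
          rw [SimpleGraph.isBridge_iff] at h
          exact h
        set R : V → Prop := fun z => (T2.deleteEdges {s(a, b)}).Reachable a z with hR
        obtain ⟨q0⟩ := hT.isConnected.preconnected a b
        have hq : dT a b = ((q0.toPath.1).edges.map (Sym2.lift ⟨we, hsym⟩)).sum :=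
          hdT a b q0.toPath
        obtain ⟨x, y, hxy, hRx, hRy, q1, q2, hsplit⟩ :=
          walk_split (Sym2.lift ⟨we, hsym⟩) R (q0.toPath.1)
            (SimpleGraph.Reachable.refl a) hbr
        have hxyne : x ≠ y := hxy.ne
        have hexne : s(x, y) ≠ s(a, b) := by
          intro h
          rw [Sym2.eq_iff] at h
          rcases h with ⟨rfl, rfl⟩ | ⟨rfl, rfl⟩
          · exact habT hxy
          · exact habT hxy.symm
        have hxy2 : ¬ T2.Adj x y := by
          intro h
          apply hRy
          exact hRx.trans (SimpleGraph.Adj.reachable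
            (by rw [SimpleGraph.deleteEdges_adj]; exact ⟨h, by simpa using hexne⟩))
        set T2' : SimpleGraph V :=
          SimpleGraph.fromEdgeSet ((T2.edgeSet \ {s(a, b)}) ∪ {s(x, y)}) with hT2'
        have hAdj' : ∀ u v, T2'.Adj u v ↔
            (T2.Adj u v ∧ s(u, v) ≠ s(a, b)) ∨ s(u, v) = s(x, y) := by
          intro u v
          rw [hT2', SimpleGraph.fromEdgeSet_adj]
          constructor
          · rintro ⟨hmem, hne'⟩
            rcases hmem with ⟨h1, h2⟩ | h1
            · exact Or.inl ⟨(SimpleGraph.mem_edgeSet _).mp h1, by simpa using h2⟩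
            · exact Or.inr (by simpa using h1)
          · rintro (⟨h1, h2⟩ | h1)
            · exact ⟨Or.inl ⟨(SimpleGraph.mem_edgeSet _).mpr h1, by simpa using h2⟩, h1.ne⟩
            · refine ⟨Or.inr (by simpa using h1), ?_⟩
              rw [Sym2.eq_iff] at h1
              rcases h1 with ⟨rfl, rfl⟩ | ⟨rfl, rfl⟩
              · exact hxyne
              · exact Ne.symm hxyne
        have hedges' : T2'.edgeSet = (T2.edgeSet \ {s(a, b)}) ∪ {s(x, y)} := by
          rw [hT2', SimpleGraph.edgeSet_fromEdgeSet]
          ext e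
          simp only [Set.mem_diff, Set.mem_union, Set.mem_singleton_iff, Set.mem_setOf_eq]
          constructor
          · rintro ⟨h1, _⟩; exact h1
          · intro h1
            refine ⟨h1, ?_⟩
            rcases h1 with ⟨h2, _⟩ | h2
            · exact T2.not_isDiag_of_mem_edgeSet h2
            · rw [h2]; simpa using hxyne
        have hle : T2.deleteEdges {s(a, b)} ≤ T2' := by
          intro u v h
          rw [SimpleGraph.deleteEdges_adj] at h
          exact (hAdj' u v).mpr (Or.inl ⟨h.1, by simpa using h.2⟩)
        have hreach2 : ∀ z, (T2.deleteEdges {s(a, b)}).Reachable z a ∨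
            (T2.deleteEdges {s(a, b)}).Reachable z b := by
          intro z
          obtain ⟨qz⟩ := hT2.isConnected.preconnected z a
          rcases reach_cases a b qz with h1 | ⟨h1, _⟩ | ⟨h1, _⟩
          · exact Or.inl h1
          · exact Or.inl h1
          · exact Or.inr h1
        have hyb : (T2.deleteEdges {s(a, b)}).Reachable y b := by
          rcases hreach2 y with h | h
          · exact absurd h.symm hRy
          · exact h
        have hconn' : T2'.Connected := by
          have h1 : T2'.Reachable a x := hRx.mono hle
          have h2 : T2'.Reachable y b := hyb.mono hle
          have h3 : T2'.Adj x y := (hAdj' x y).mpr (Or.inr rfl)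
          have hab' : T2'.Reachable b a := ((h1.trans h3.reachable).trans h2).symm
          have hz : ∀ z : V, T2'.Reachable z a := by
            intro z
            rcases hreach2 z with h | h
            · exact h.mono hle
            · exact (h.mono hle).trans hab'
          haveI : Nonempty V := ⟨a⟩
          exact SimpleGraph.Connected.mk (fun u v => (hz u).trans (hz v).symm)
        have hacy' : T2'.IsAcyclic := by
          intro v c hc
          by_cases hmem : s(x, y) ∈ c.edges
          · have hcyc := SimpleGraph.adj_and_reachable_delete_edges_iff_exists_cycle.mpr
              ⟨v, c, hc, hmem⟩
            have hle2 : (T2' \ SimpleGraph.fromEdgeSet {s(x, y)}) ≤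
                T2.deleteEdges {s(a, b)} := by
              intro u' v' h'
              obtain ⟨h1, h2⟩ := h'
              rw [SimpleGraph.fromEdgeSet_adj] at h2
              rw [SimpleGraph.deleteEdges_adj]
              rcases (hAdj' u' v').mp h1 with ⟨h3, h4⟩ | h3
              · exact ⟨h3, by simpa using h4⟩
              · exact absurd ⟨by simpa using h3, h1.ne⟩ h2
            exact hRy (hRx.trans (hcyc.2.mono hle2))
          · have hsubc : ∀ e ∈ c.edges, e ∈ T2.edgeSet := by
              intro e he
              have h1 : e ∈ T2'.edgeSet := c.edges_subset_edgeSet he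
              rw [hedges'] at h1
              rcases h1 with ⟨h2, _⟩ | h2
              · exact h2
              · exact absurd he (by rw [show e = s(x, y) from by simpa using h2]; exact hmem)
            exact hT2.IsAcyclic (c.transfer T2 hsubc) (hc.transfer hsubc)
        have hT2't : T2'.IsTree := ⟨hconn', hacy'⟩
        have hdiffset : T2'.edgeSet \ T.edgeSet = (T2.edgeSet \ T.edgeSet) \ {s(a, b)} := by
          rw [hedges']
          ext e
          simp only [Set.mem_diff, Set.mem_union, Set.mem_singleton_iff]
          constructor
          · rintro ⟨h1 | h1, h2⟩
            · exact ⟨⟨h1.1, h2⟩, h1.2⟩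
            · exact absurd (h1 ▸ (SimpleGraph.mem_edgeSet _).mpr hxy) h2
          · rintro ⟨⟨h1, h2⟩, h3⟩
            exact ⟨Or.inl ⟨h1, h3⟩, h2⟩
        have hcard' : (T2'.edgeSet \ T.edgeSet).ncard = n - 1 := by
          rw [hdiffset]
          have h1 : s(a, b) ∉ ((T2.edgeSet \ T.edgeSet) \ {s(a, b)}) := by simp
          have h2 : insert s(a, b) ((T2.edgeSet \ T.edgeSet) \ {s(a, b)}) =
              T2.edgeSet \ T.edgeSet := by
            rw [Set.insert_diff_singleton]
            exact Set.insert_eq_self.mpr he0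
          have h3 := Set.ncard_insert_of_notMem h1 (Set.toFinite _)
          rw [h2, hcard] at h3
          omega
        obtain ⟨f', hskew', hsurp', hcost'⟩ := ih (n - 1) (by omega) T2' hT2't hcard'
        clear_value T2'
        have hdeg' : ∀ v, (degreeOf T2' v : ℤ) = (degreeOf T2 v : ℤ)
            - ((if v = a then 1 else 0) + (if v = b then 1 else 0))
            + ((if v = x then 1 else 0) + (if v = y then 1 else 0)) := by
          intro v
          rw [degreeOf_eq_sum, degreeOf_eq_sum]
          have hpt : ∀ u, (if T2'.Adj v u then (1 : ℤ) else 0) =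
              (if T2.Adj v u then 1 else 0) - (if s(v, u) = s(a, b) then 1 else 0)
              + (if s(v, u) = s(x, y) then 1 else 0) := by
            intro u
            by_cases h1 : s(v, u) = s(a, b)
            · have hT2vu : T2.Adj v u := by
                rw [← SimpleGraph.mem_edgeSet, h1]; exact he0.1
              have hne2 : s(v, u) ≠ s(x, y) := by rw [h1]; exact Ne.symm hexne
              have hA : ¬ T2'.Adj v u := by
                rw [hAdj']
                rintro (⟨-, h⟩ | h)
                · exact h h1
                · exact hne2 h
              rw [if_neg hA, if_pos hT2vu, if_pos h1, if_neg hne2]; ring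
            · by_cases h2 : s(v, u) = s(x, y)
              · have hnadj : ¬ T2.Adj v u := by
                  rw [← SimpleGraph.mem_edgeSet, h2, SimpleGraph.mem_edgeSet]
                  exact hxy2
                have hA : T2'.Adj v u := (hAdj' v u).mpr (Or.inr h2)
                rw [if_pos hA, if_neg hnadj, if_neg h1, if_pos h2]; ring
              · have hA : T2'.Adj v u ↔ T2.Adj v u := by
                  rw [hAdj']
                  constructor
                  · rintro (⟨h3, -⟩ | h3)
                    · exact h3
                    · exact absurd h3 h2
                  · intro h3; exact Or.inl ⟨h3, h1⟩
                by_cases h3 : T2.Adj v u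
                · rw [if_pos (hA.mpr h3), if_pos h3, if_neg h1, if_neg h2]; ring
                · rw [if_neg (fun hh => h3 (hA.mp hh)), if_neg h3, if_neg h1, if_neg h2]; ring
          simp only [hpt]
          rw [Finset.sum_add_distrib, Finset.sum_sub_distrib,
            sum_sym2_ind_one a b v hne_ab, sum_sym2_ind_one x y v hxyne]
        have hw' : weightOf T2' dT = weightOf T2 dT - dT a b + dT x y := by
          unfold weightOf
          have hpt : ∀ u v, (if T2'.Adj u v then dT u v else 0) =
              (if T2.Adj u v then dT u v else 0) - (if s(u, v) = s(a, b) then dT u v else 0)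
              + (if s(u, v) = s(x, y) then dT u v else 0) := by
            intro u v
            by_cases h1 : s(u, v) = s(a, b)
            · have hT2vu : T2.Adj u v := by
                rw [← SimpleGraph.mem_edgeSet, h1]; exact he0.1
              have hne2 : s(u, v) ≠ s(x, y) := by rw [h1]; exact Ne.symm hexne
              have hA : ¬ T2'.Adj u v := by
                rw [hAdj']
                rintro (⟨-, h⟩ | h)
                · exact h h1
                · exact hne2 h
              rw [if_neg hA, if_pos hT2vu, if_pos h1, if_neg hne2]; ring
            · by_cases h2 : s(u, v) = s(x, y)
              · have hnadj : ¬ T2.Adj u v := by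
                  rw [← SimpleGraph.mem_edgeSet, h2, SimpleGraph.mem_edgeSet]
                  exact hxy2
                have hA : T2'.Adj u v := (hAdj' u v).mpr (Or.inr h2)
                rw [if_pos hA, if_neg hnadj, if_neg h1, if_pos h2]; ring
              · have hA : T2'.Adj u v ↔ T2.Adj u v := by
                  rw [hAdj']
                  constructor
                  · rintro (⟨h3, -⟩ | h3)
                    · exact h3
                    · exact absurd h3 h2
                  · intro h3; exact Or.inl ⟨h3, h1⟩
                by_cases h3 : T2.Adj u v
                · rw [if_pos (hA.mpr h3), if_pos h3, if_neg h1, if_neg h2]; ring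
                · rw [if_neg (fun hh => h3 (hA.mp hh)), if_neg h3, if_neg h1, if_neg h2]; ring
          have hsum : ∑ u : V, ∑ v : V, (if T2'.Adj u v then dT u v else 0)
              = (∑ u : V, ∑ v : V, (if T2.Adj u v then dT u v else 0))
                - (dT a b + dT b a) + (dT x y + dT y x) := by
            simp only [hpt, Finset.sum_add_distrib, Finset.sum_sub_distrib]
            rw [sum_sym2_ind dT a b hne_ab, sum_sym2_ind dT x y hxyne]
          rw [hsum, hdT_symm b a, hdT_symm y x]
          ring
        have hg1s := walkFlow_skew q1
        have hg2s := walkFlow_skew q2.reverse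
        refine ⟨f' + walkFlow q1 + walkFlow q2.reverse, ?_, ?_, ?_⟩
        · exact skew_add (skew_add hskew' hg1s) hg2s
        · intro v
          rw [surplus_skew _ (skew_add (skew_add hskew' hg1s) hg2s) v]
          simp only [Pi.add_apply]
          rw [Finset.sum_add_distrib, Finset.sum_add_distrib]
          rw [← surplus_skew f' hskew' v,
            sum_walkFlow q1 v, sum_walkFlow q2.reverse v, hsurp' v, hdeg' v]
          ring
        · have hc1 : flowCost (f' + walkFlow q1 + walkFlow q2.reverse) dT ≤
              flowCost f' dT + flowCost (walkFlow q1) dT + flowCost (walkFlow q2.reverse) dT := by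
            calc flowCost (f' + walkFlow q1 + walkFlow q2.reverse) dT
                ≤ flowCost (f' + walkFlow q1) dT + flowCost (walkFlow q2.reverse) dT :=
                  flowCost_add_le _ _ _ hdT0
              _ ≤ _ := by
                  have := flowCost_add_le f' (walkFlow q1) dT hdT0
                  linarith
          have hcg1 : flowCost (walkFlow q1) dT ≤ (q1.edges.map (Sym2.lift ⟨we, hsym⟩)).sum :=
            flowCost_walkFlow_le dT hdT0 we hsym hdT_adj q1
          have hcg2 : flowCost (walkFlow q2.reverse) dT ≤ (q2.edges.map (Sym2.lift ⟨we, hsym⟩)).sum := by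
            have h := flowCost_walkFlow_le dT hdT0 we hsym hdT_adj q2.reverse
            rwa [SimpleGraph.Walk.edges_reverse, List.map_reverse, List.sum_reverse] at h
          have hLxy : Sym2.lift ⟨we, hsym⟩ s(x, y) = dT x y := by
            rw [Sym2.lift_mk, hdT_adj x y hxy]
          have hqab : dT a b = (q1.edges.map (Sym2.lift ⟨we, hsym⟩)).sum + dT x y
              + (q2.edges.map (Sym2.lift ⟨we, hsym⟩)).sum := by
            rw [hq, hsplit, hLxy]
          linarith [hcost', hw']

end Key


/-- Let `T` be a tree with positive edge weights `we` and let `dT` be the induced tree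
metric (the weight of the unique `T`-path between two vertices).  If `T*` is any spanning
tree meeting the degree bounds `d` (with `d v ≥ 1`), then there is a feasible legal integer
flow of cost at most `w(T*) - w(T)`, weights computed in the metric `dT`. -/
theorem stmt3 {V : Type*} [Fintype V] (hV : 2 ≤ Fintype.card V)
    (T : SimpleGraph V) (hT : T.IsTree)
    (we : V → V → ℝ) (hsym : ∀ a b, we a b = we b a)
    (hpos : ∀ a b, T.Adj a b → 0 < we a b)
    (dT : V → V → ℝ)
    (hdT : ∀ (u v : V) (p : T.Path u v),
      dT u v = (p.1.edges.map (Sym2.lift ⟨we, hsym⟩)).sum)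
    (d : V → ℕ) (hd : ∀ v, 1 ≤ d v)
    (Tstar : SimpleGraph V) (hTstar : Tstar.IsTree)
    (hdeg : ∀ v, degreeOf Tstar v ≤ d v) :
    ∃ f : V → V → ℤ, IsSkew f ∧ (∀ v, f v v = 0) ∧
      FeasibleFlow T d f ∧ LegalFlow T f ∧
      flowCost f dT ≤ weightOf Tstar dT - weightOf T dT := by
  obtain ⟨f, hskew, hsurp, hcost⟩ := key T hT we hsym hpos dT hdT
    ((Tstar.edgeSet \ T.edgeSet).ncard) Tstar hTstar rfl
  refine ⟨f, hskew, fun v => skew_diag hskew v, ?_, ?_, hcost⟩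
  · intro v
    rw [hsurp v]
    have h1 : (degreeOf Tstar v : ℤ) ≤ (d v : ℤ) := by exact_mod_cast hdeg v
    linarith
  · intro v
    rw [hsurp v]
    have h2 : (1 : ℤ) ≤ (degreeOf Tstar v : ℤ) := by
      exact_mod_cast one_le_degreeOf hTstar.isConnected hV v
    linarith
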